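/- Suppose that for ℙ-almost all ω ∈ Ω the partial sums Σ_N(ω) converge weakly in 𝒳 as N → ∞, i.e. there exists Σ(ω) ∈ 𝒳 with ⟨Σ_N(ω), y⟩_𝒳 → ⟨Σ(ω), y⟩_𝒳 for every y ∈ 𝒳. Then ∑_{n=0}^∞ ‖x_n‖_𝒳² < ∞. -/

import Mathlib

open MeasureTheory ProbabilityTheory Filter
open scoped NNReal RealInnerProductSpace
open Real
open scoped ENNReal

section AuxGaussianSeries

lemma gaussianReal01_eq :
    gaussianReal 0 1 = MeasureTheory.Measure.withDensity MeasureTheory.volume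
      (fun x => ENNReal.ofReal ((√(2 * π))⁻¹ * rexp (- x ^ 2 / 2))) := by
  rw [gaussianReal_of_var_ne_zero 0 one_ne_zero]
  congr 1
  funext xx
  rw [gaussianPDF_def, gaussianPDFReal_def]
  norm_num

lemma gauss_integrand_integrable (k : ℕ) :
    Integrable (fun x : ℝ => x ^ k * rexp (- (1/2) * x ^ 2)) := by
  have h := integrable_rpow_mul_exp_neg_mul_sq (b := 1/2) (by norm_num) (s := (k:ℝ))
    (by have := Nat.cast_nonneg (α := ℝ) k; linarith)
  convert h using 2 with xx
  rw [Real.rpow_natCast]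

lemma gauss_integrable_pow (k : ℕ) :
    Integrable (fun x : ℝ => x ^ k) (gaussianReal 0 1) := by
  rw [gaussianReal01_eq, integrable_withDensity_iff (by fun_prop)
    (by filter_upwards with x using ENNReal.ofReal_lt_top)]
  have he : (fun x : ℝ => x ^ k * (ENNReal.ofReal ((√(2 * π))⁻¹ * rexp (- x ^ 2 / 2))).toReal)
      = fun x => (√(2 * π))⁻¹ * (x ^ k * rexp (- (1/2) * x ^ 2)) := by
    funext xx
    rw [ENNReal.toReal_ofReal (by positivity), show - xx ^ 2 / 2 = -(1/2) * xx ^ 2 by ring]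
    ring
  rw [he]
  exact (gauss_integrand_integrable k).const_mul _

lemma gauss_integral_eq (g : ℝ → ℝ) :
    ∫ x, g x ∂(gaussianReal 0 1)
      = (√(2 * π))⁻¹ * ∫ x, rexp (- x ^ 2 / 2) * g x := by
  have hd : (fun x => ENNReal.ofReal ((√(2 * π))⁻¹ * rexp (- x ^ 2 / 2)))
      = (fun x => ((((√(2 * π))⁻¹ * rexp (- x ^ 2 / 2)).toNNReal : ℝ≥0) : ℝ≥0∞)) := rfl
  have hm : Measurable fun x : ℝ => ((√(2 * π))⁻¹ * rexp (- x ^ 2 / 2)).toNNReal := by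
    fun_prop
  rw [gaussianReal01_eq, hd, integral_withDensity_eq_integral_smul hm g, ← integral_const_mul]
  congr 1
  funext xx
  have hnn : (0:ℝ) ≤ (√(2 * π))⁻¹ * rexp (- xx ^ 2 / 2) := by positivity
  rw [NNReal.smul_def, Real.coe_toNNReal _ hnn]
  simp [smul_eq_mul]
  ring

lemma gauss_int_Ioi (k : ℕ) :
    ∫ x in Set.Ioi (0:ℝ), x ^ k * rexp (- (1/2) * x ^ 2)
      = (1/2:ℝ) ^ (-((k:ℝ) + 1) / 2) * (1 / 2) * Real.Gamma (((k:ℝ) + 1) / 2) := by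
  have h := integral_rpow_mul_exp_neg_mul_rpow (p := 2) (q := (k:ℝ)) (b := 1/2)
    (by norm_num) (by have := Nat.cast_nonneg (α := ℝ) k; linarith) (by norm_num)
  have e : ∀ x ∈ Set.Ioi (0:ℝ), x ^ (k:ℝ) * rexp (- (1/2) * x ^ (2:ℝ))
      = x ^ k * rexp (- (1/2) * x ^ 2) := by
    intro x hx
    rw [Real.rpow_natCast, show (2:ℝ) = ((2:ℕ):ℝ) by norm_num, Real.rpow_natCast]
  rw [← setIntegral_congr_fun measurableSet_Ioi e, h]

lemma half_rpow_neg (a : ℝ) : (1/2:ℝ) ^ (-a) = (2:ℝ) ^ a := by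
  rw [one_div, Real.inv_rpow (by norm_num : (0:ℝ) ≤ 2), ← Real.rpow_neg (by norm_num), neg_neg]

lemma two_rpow_3half : (2:ℝ) ^ ((3:ℝ)/2) = 2 * √2 := by
  rw [show (3:ℝ)/2 = 1 + 1/2 by norm_num, Real.rpow_add (by norm_num), Real.rpow_one,
    ← Real.sqrt_eq_rpow]

lemma two_rpow_5half : (2:ℝ) ^ ((5:ℝ)/2) = 4 * √2 := by
  rw [show (5:ℝ)/2 = 2 + 1/2 by norm_num, Real.rpow_add (by norm_num),
    ← Real.sqrt_eq_rpow, show (2:ℝ) = ((2:ℕ):ℝ) by norm_num, Real.rpow_natCast]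
  norm_num

lemma gauss_moment_two : ∫ x, x ^ 2 ∂(gaussianReal 0 1) = 1 := by
  rw [gauss_integral_eq]
  have key : ∫ x : ℝ, rexp (- x ^ 2 / 2) * x ^ 2
      = 2 * ∫ x in Set.Ioi (0:ℝ), x ^ 2 * rexp (- (1/2) * x ^ 2) := by
    rw [← integral_comp_abs (f := fun u => u ^ 2 * rexp (- (1/2) * u ^ 2))]
    congr 1
    funext xx
    rw [← sq_abs xx]
    ring_nf
  rw [key, gauss_int_Ioi 2,
    show (-(((2:ℕ):ℝ) + 1) / 2) = -((3:ℝ)/2) by norm_num,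
    show ((((2:ℕ):ℝ) + 1) / 2) = (1/2:ℝ) + 1 by norm_num,
    Real.Gamma_add_one (by norm_num), Real.Gamma_one_half_eq,
    half_rpow_neg, two_rpow_3half, Real.sqrt_mul (by norm_num : (0:ℝ) ≤ 2) π]
  have s2 : √2 * √2 = 2 := Real.mul_self_sqrt (by norm_num)
  have sp : (0:ℝ) < √π := Real.sqrt_pos.mpr pi_pos
  have s2p : (0:ℝ) < √2 := Real.sqrt_pos.mpr (by norm_num)
  field_simp

lemma gauss_moment_four : ∫ x, x ^ 4 ∂(gaussianReal 0 1) = 3 := by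
  rw [gauss_integral_eq]
  have key : ∫ x : ℝ, rexp (- x ^ 2 / 2) * x ^ 4
      = 2 * ∫ x in Set.Ioi (0:ℝ), x ^ 4 * rexp (- (1/2) * x ^ 2) := by
    rw [← integral_comp_abs (f := fun u => u ^ 4 * rexp (- (1/2) * u ^ 2))]
    congr 1
    funext xx
    rw [show xx ^ 4 = |xx| ^ 4 by rw [← abs_pow, abs_of_nonneg (by positivity)], ← sq_abs xx]
    ring_nf
  rw [key, gauss_int_Ioi 4,
    show (-(((4:ℕ):ℝ) + 1) / 2) = -((5:ℝ)/2) by norm_num,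
    show ((((4:ℕ):ℝ) + 1) / 2) = (3/2:ℝ) + 1 by norm_num,
    Real.Gamma_add_one (by norm_num),
    show ((3:ℝ)/2) = (1/2:ℝ) + 1 by norm_num,
    Real.Gamma_add_one (by norm_num), Real.Gamma_one_half_eq,
    half_rpow_neg, two_rpow_5half, Real.sqrt_mul (by norm_num : (0:ℝ) ≤ 2) π]
  have s2 : √2 * √2 = 2 := Real.mul_self_sqrt (by norm_num)
  have sp : (0:ℝ) < √π := Real.sqrt_pos.mpr pi_pos
  have s2p : (0:ℝ) < √2 := Real.sqrt_pos.mpr (by norm_num)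
  field_simp
  ring

lemma gauss_map_neg : (gaussianReal 0 1).map (fun x => -x) = gaussianReal 0 1 := by
  have h := gaussianReal_map_const_mul (μ := 0) (v := 1) (-1)
  rw [show ((-1 : ℝ) * ·) = (fun x : ℝ => -x) by funext xx; ring] at h
  rw [h]
  norm_num

lemma gauss_moment_odd (k : ℕ) (hk : Odd k) : ∫ x, x ^ k ∂(gaussianReal 0 1) = 0 := by
  have h1 : ∫ x, x ^ k ∂(gaussianReal 0 1) = ∫ x, (-x) ^ k ∂(gaussianReal 0 1) := by
    conv_lhs => rw [← gauss_map_neg]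
    rw [integral_map (by fun_prop) (by fun_prop)]
  simp only [hk.neg_pow] at h1
  rw [integral_neg] at h1
  linarith


section OmegaLevel
variable {Ω : Type*} [MeasurableSpace Ω] {P : Measure Ω}

lemma gamma_pow_integrable {g : Ω → ℝ} (hg : Measurable g)
    (hlaw : Measure.map g P = gaussianReal 0 1) (k : ℕ) :
    Integrable (fun ω => g ω ^ k) P := by
  have h : Integrable (fun x : ℝ => x ^ k) (Measure.map g P) := by
    rw [hlaw]; exact gauss_integrable_pow k
  exact (integrable_map_measure (measurable_id.pow_const k).aestronglyMeasurable hg.aemeasurable).mp h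

lemma gamma_abs_pow_integrable {g : Ω → ℝ} (hg : Measurable g)
    (hlaw : Measure.map g P = gaussianReal 0 1) (k : ℕ) :
    Integrable (fun ω => |g ω| ^ k) P := by
  have := (gamma_pow_integrable hg hlaw k).abs
  simpa [abs_pow] using this

lemma gamma_moment {g : Ω → ℝ} (hg : Measurable g)
    (hlaw : Measure.map g P = gaussianReal 0 1) (k : ℕ) :
    ∫ ω, g ω ^ k ∂P = ∫ x, x ^ k ∂(gaussianReal 0 1) := by
  rw [← hlaw, integral_map (f := fun x : ℝ => x ^ k) hg.aemeasurable (measurable_id.pow_const k).aestronglyMeasurable]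

end OmegaLevel

section Helpers
variable {X : Type*} [NormedAddCommGroup X] [InnerProductSpace ℝ X]
    {Ω : Type*} [MeasurableSpace Ω] {P : Measure Ω}

lemma meas_g_sum (γ : ℕ → Ω → ℝ) (hmeas : ∀ n, Measurable (γ n)) (x : ℕ → X)
    (g : X → ℝ) (hg : Continuous g) (m : ℕ) :
    Measurable (fun ω => g (∑ n ∈ Finset.range m, γ n ω • x n)) := by
  have e : (fun ω => g (∑ n ∈ Finset.range m, γ n ω • x n))
      = (fun v : Fin m → ℝ => g (∑ i : Fin m, v i • x i)) ∘ (fun ω i => γ i ω) := by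
    funext ω
    simp only [Function.comp_apply]
    congr 1
    rw [Fin.sum_univ_eq_sum_range (fun n => γ n ω • x n)]
  rw [e]
  exact ((hg.comp (continuous_finset_sum _ fun i _ =>
    ((continuous_apply (i : Fin m)).smul continuous_const))).measurable).comp
    (measurable_pi_lambda _ fun i => hmeas i)

lemma indep_g_sum (γ : ℕ → Ω → ℝ) (hmeas : ∀ n, Measurable (γ n))
    (hindep : iIndepFun γ P) (x : ℕ → X)
    (g : X → ℝ) (hg : Continuous g) (h : ℝ → ℝ) (hh : Measurable h) (N : ℕ) :
    IndepFun (fun ω => g (∑ n ∈ Finset.range (N+1), γ n ω • x n))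
      (fun ω => h (γ (N+1) ω)) P := by
  classical
  have hd : Disjoint (Finset.range (N+1)) ({N+1} : Finset ℕ) := by
    simp [Finset.disjoint_left]
    omega
  have base := hindep.indepFun_finset (Finset.range (N+1)) {N+1} hd hmeas
  set φ : ((i : (Finset.range (N+1) : Finset ℕ)) → ℝ) → ℝ :=
    fun v => g (∑ i ∈ (Finset.range (N+1)).attach, v i • x i) with hφ
  set ψ : ((i : ({N+1} : Finset ℕ)) → ℝ) → ℝ :=
    fun v => h (v ⟨N+1, Finset.mem_singleton_self _⟩) with hψ
  have hφm : Measurable φ :=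
    (hg.comp (continuous_finset_sum _ fun i _ =>
      (continuous_apply i).smul continuous_const)).measurable
  have hψm : Measurable ψ := hh.comp (measurable_pi_apply _)
  have key := base.comp hφm hψm
  have e1 : (φ ∘ fun a (i : (Finset.range (N+1) : Finset ℕ)) => γ i a)
      = fun ω => g (∑ n ∈ Finset.range (N+1), γ n ω • x n) := by
    funext ω
    simp only [Function.comp_apply, hφ]
    congr 1
    exact Finset.sum_attach _ (fun n => γ n ω • x n)
  have e2 : (ψ ∘ fun a (i : ({N+1} : Finset ℕ)) => γ i a) = fun ω => h (γ (N+1) ω) := by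
    funext ω
    simp [hψ]
  rwa [e1, e2] at key

end Helpers


set_option maxHeartbeats 1000000 in
lemma series_moments
    {X : Type*} [NormedAddCommGroup X] [InnerProductSpace ℝ X]
    {Ω : Type*} [MeasurableSpace Ω] (P : Measure Ω) [IsProbabilityMeasure P]
    (γ : ℕ → Ω → ℝ) (hmeas : ∀ n, Measurable (γ n))
    (hindep : iIndepFun γ P)
    (hlaw : ∀ n, Measure.map (γ n) P = gaussianReal 0 1)
    (x : ℕ → X) : ∀ N : ℕ,
    (∀ k : ℕ, k ≤ 4 → Integrable (fun ω => ‖∑ n ∈ Finset.range (N+1), γ n ω • x n‖ ^ k) P)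
    ∧ (∫ ω, ‖∑ n ∈ Finset.range (N+1), γ n ω • x n‖ ^ 2 ∂P
        = ∑ n ∈ Finset.range (N+1), ‖x n‖ ^ 2)
    ∧ (∫ ω, ‖∑ n ∈ Finset.range (N+1), γ n ω • x n‖ ^ 4 ∂P
        ≤ 3 * (∑ n ∈ Finset.range (N+1), ‖x n‖ ^ 2) ^ 2) := by
  have m1 : ∀ n, ∫ ω, γ n ω ∂P = 0 := fun n => by
    have h := gamma_moment (hmeas n) (hlaw n) 1
    rw [gauss_moment_odd 1 odd_one] at h
    simpa using h
  have m2 : ∀ n, ∫ ω, γ n ω ^ 2 ∂P = 1 := fun n => by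
    rw [gamma_moment (hmeas n) (hlaw n) 2, gauss_moment_two]
  have m3 : ∀ n, ∫ ω, γ n ω ^ 3 ∂P = 0 := fun n => by
    rw [gamma_moment (hmeas n) (hlaw n) 3, gauss_moment_odd 3 (by decide)]
  have m4 : ∀ n, ∫ ω, γ n ω ^ 4 ∂P = 3 := fun n => by
    rw [gamma_moment (hmeas n) (hlaw n) 4, gauss_moment_four]
  intro N
  induction N with
  | zero =>
    simp only [Finset.range_one, Finset.sum_singleton, zero_add]
    refine ⟨fun k hk => ?_, ?_, ?_⟩
    · have e : (fun ω => ‖γ 0 ω • x 0‖ ^ k) = fun ω => |γ 0 ω| ^ k * ‖x 0‖ ^ k := by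
        funext ω; rw [norm_smul, Real.norm_eq_abs, mul_pow]
      rw [e]
      exact (gamma_abs_pow_integrable (hmeas 0) (hlaw 0) k).mul_const _
    · have e : (fun ω => ‖γ 0 ω • x 0‖ ^ 2) = fun ω => γ 0 ω ^ 2 * ‖x 0‖ ^ 2 := by
        funext ω; rw [norm_smul, Real.norm_eq_abs, mul_pow, sq_abs]
      rw [e, integral_mul_const, m2 0, one_mul]
    · have e : (fun ω => ‖γ 0 ω • x 0‖ ^ 4) = fun ω => γ 0 ω ^ 4 * ‖x 0‖ ^ 4 := by
        funext ω
        rw [norm_smul, Real.norm_eq_abs, mul_pow,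
          show |γ 0 ω| ^ 4 = (|γ 0 ω| ^ 2) ^ 2 by ring, sq_abs]
        ring
      rw [e, integral_mul_const, m4 0]
      nlinarith [norm_nonneg (x 0), sq_nonneg (‖x 0‖ ^ 2)]
  | succ N ih =>
    obtain ⟨ihInt, ihV, ih4⟩ := ih
    set a : Ω → X := fun ω => ∑ n ∈ Finset.range (N+1), γ n ω • x n with ha
    have ha' : ∀ ω, ∑ n ∈ Finset.range (N+1), γ n ω • x n = a ω := fun ω => rfl
    simp only [Finset.sum_range_succ (n := N+1)]
    simp only [ha'] at ihInt ihV ih4 ⊢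
    set t : Ω → ℝ := γ (N+1) with ht
    set c : ℝ := ‖x (N+1)‖ with hc
    set V : ℝ := ∑ n ∈ Finset.range (N+1), ‖x n‖ ^ 2 with hV
    have hVnn : 0 ≤ V := Finset.sum_nonneg fun i _ => by positivity
    have hcnn : 0 ≤ c := norm_nonneg _
    -- measurability / independence helpers
    have hameas : ∀ g : X → ℝ, Continuous g → Measurable (fun ω => g (a ω)) :=
      fun g hg => meas_g_sum γ hmeas x g hg (N+1)
    have hindepgh : ∀ (g : X → ℝ), Continuous g → ∀ (h : ℝ → ℝ), Measurable h →
        IndepFun (fun ω => g (a ω)) (fun ω => h (t ω)) P :=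
      fun g hg h hh => indep_g_sum γ hmeas hindep x g hg h hh N
    have prod_eq : ∀ (g : X → ℝ), Continuous g → ∀ (h : ℝ → ℝ), Measurable h →
        ∫ ω, g (a ω) * h (t ω) ∂P = (∫ ω, g (a ω) ∂P) * ∫ ω, h (t ω) ∂P :=
      fun g hg h hh => (hindepgh g hg h hh).integral_fun_mul_eq_mul_integral
        ((hameas g hg).aestronglyMeasurable) ((hh.comp (hmeas (N+1))).aestronglyMeasurable)
    have prod_int : ∀ (g : X → ℝ), Continuous g → ∀ (h : ℝ → ℝ), Measurable h →
        Integrable (fun ω => g (a ω)) P → Integrable (fun ω => h (t ω)) P →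
        Integrable (fun ω => g (a ω) * h (t ω)) P :=
      fun g hg h hh hig hih => (hindepgh g hg h hh).integrable_mul hig hih
    -- continuity facts
    have hcB : Continuous (fun z : X => ⟪z, x (N+1)⟫) :=
      continuous_id.inner continuous_const
    have hcA : Continuous (fun z : X => ‖z‖ ^ 2) := continuous_norm.pow 2
    have hcnorm : ∀ k : ℕ, Continuous (fun z : X => ‖z‖ ^ k) :=
      fun k => continuous_norm.pow k
    -- integrabilities of t powers
    have Intt : ∀ k : ℕ, Integrable (fun ω => t ω ^ k) P :=
      fun k => gamma_pow_integrable (hmeas (N+1)) (hlaw (N+1)) k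
    have Inttabs : ∀ k : ℕ, Integrable (fun ω => |t ω| ^ k) P :=
      fun k => gamma_abs_pow_integrable (hmeas (N+1)) (hlaw (N+1)) k
    -- integrability of B and friends
    have hBle : ∀ ω, |⟪a ω, x (N+1)⟫| ≤ ‖a ω‖ * c := fun ω => abs_real_inner_le_norm _ _
    have IntB : Integrable (fun ω => ⟪a ω, x (N+1)⟫) P := by
      refine Integrable.mono' ((ihInt 1 (by norm_num)).mul_const c)
        ((hameas _ hcB).aestronglyMeasurable) ?_
      filter_upwards with ω
      rw [Real.norm_eq_abs]
      simpa using hBle ω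
    have IntB2 : Integrable (fun ω => ⟪a ω, x (N+1)⟫ ^ 2) P := by
      refine Integrable.mono' ((ihInt 2 (by norm_num)).mul_const (c ^ 2))
        ((hameas _ (hcB.pow 2)).aestronglyMeasurable) ?_
      filter_upwards with ω
      rw [Real.norm_eq_abs, abs_pow]
      calc |⟪a ω, x (N+1)⟫| ^ 2 ≤ (‖a ω‖ * c) ^ 2 := by
            exact pow_le_pow_left₀ (abs_nonneg _) (hBle ω) 2
        _ = ‖a ω‖ ^ 2 * c ^ 2 := by ring
    have IntAB : Integrable (fun ω => ‖a ω‖ ^ 2 * ⟪a ω, x (N+1)⟫) P := by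
      refine Integrable.mono' ((ihInt 3 (by norm_num)).mul_const c)
        ((hameas _ (by exact (hcA.mul hcB))).aestronglyMeasurable) ?_
      filter_upwards with ω
      rw [Real.norm_eq_abs, abs_mul, abs_pow, abs_norm]
      calc ‖a ω‖ ^ 2 * |⟪a ω, x (N+1)⟫| ≤ ‖a ω‖ ^ 2 * (‖a ω‖ * c) := by
            exact mul_le_mul_of_nonneg_left (hBle ω) (by positivity)
        _ = ‖a ω‖ ^ 3 * c := by ring
    -- pointwise expansion of the square
    have hpt : ∀ ω, ‖a ω + t ω • x (N+1)‖ ^ 2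
        = ‖a ω‖ ^ 2 + (2 * (⟪a ω, x (N+1)⟫ * t ω) + c ^ 2 * t ω ^ 2) := by
      intro ω
      rw [norm_add_sq_real, real_inner_smul_right, norm_smul, Real.norm_eq_abs, mul_pow, sq_abs]
      ring
    -- basic product integrals
    have iBt : ∫ ω, ⟪a ω, x (N+1)⟫ * t ω ∂P = 0 := by
      have h := prod_eq _ hcB id measurable_id
      simp only [id_eq] at h
      rw [h, m1 (N+1), mul_zero]
    have IntBt : Integrable (fun ω => ⟪a ω, x (N+1)⟫ * t ω) P := by
      have h := prod_int _ hcB id measurable_id IntB (by simpa using Intt 1)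
      simpa using h
    have Intt2c : Integrable (fun ω => c ^ 2 * t ω ^ 2) P := (Intt 2).const_mul _
    have IntBt2 : Integrable (fun ω => 2 * (⟪a ω, x (N+1)⟫ * t ω)) P := IntBt.const_mul 2
    -- second moment identity
    have hI2 : ∫ ω, ‖a ω + t ω • x (N+1)‖ ^ 2 ∂P = V + c ^ 2 := by
      have e : (fun ω => ‖a ω + t ω • x (N+1)‖ ^ 2)
          = fun ω => ‖a ω‖ ^ 2 + (2 * (⟪a ω, x (N+1)⟫ * t ω) + c ^ 2 * t ω ^ 2) := by
        funext ω; exact hpt ω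
      have IntRest2 : Integrable (fun ω => 2 * (⟪a ω, x (N+1)⟫ * t ω) + c ^ 2 * t ω ^ 2) P :=
        IntBt2.add Intt2c
      rw [e, integral_add (ihInt 2 (by norm_num)) IntRest2,
        integral_add IntBt2 Intt2c, integral_const_mul, integral_const_mul, iBt,
        m2 (N+1), ihV]
      ring
    refine ⟨?_, hI2, ?_⟩
    · -- integrability of all powers up to 4
      intro k hk
      have bound_int : Integrable (fun ω => (‖a ω‖ + |t ω| * c) ^ k) P := by
        have e : (fun ω => (‖a ω‖ + |t ω| * c) ^ k)
            = fun ω => ∑ i ∈ Finset.range (k+1),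
                (‖a ω‖ ^ i * |t ω| ^ (k-i)) * (c ^ (k-i) * (k.choose i)) := by
          funext ω
          rw [add_pow]
          refine Finset.sum_congr rfl fun i hi => ?_
          rw [mul_pow]; ring
        rw [e]
        refine integrable_finset_sum _ fun i hi => ?_
        have hik : i ≤ 4 := le_trans (Nat.lt_succ_iff.mp (Finset.mem_range.mp hi)) hk
        exact (prod_int _ (hcnorm i) (fun r => |r| ^ (k-i)) (by fun_prop)
          (ihInt i hik) (Inttabs (k-i))).mul_const _
      refine Integrable.mono' bound_int ?_ ?_
      · have e : (fun ω => ‖a ω + t ω • x (N+1)‖ ^ k)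
            = fun ω => ‖∑ n ∈ Finset.range (N+2), γ n ω • x n‖ ^ k := by
          funext ω
          rw [Finset.sum_range_succ, ha' ω]
        rw [e]
        exact (meas_g_sum γ hmeas x _ (hcnorm k) (N+2)).aestronglyMeasurable
      · filter_upwards with ω
        rw [Real.norm_eq_abs, abs_of_nonneg (by positivity)]
        refine pow_le_pow_left₀ (norm_nonneg _) ?_ k
        calc ‖a ω + t ω • x (N+1)‖ ≤ ‖a ω‖ + ‖t ω • x (N+1)‖ := norm_add_le _ _
          _ = ‖a ω‖ + |t ω| * c := by rw [norm_smul, Real.norm_eq_abs]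
    · -- fourth moment bound
      have e4 : (fun ω => ‖a ω + t ω • x (N+1)‖ ^ 4)
          = fun ω => ‖a ω‖ ^ 4
            + (4 * ((‖a ω‖ ^ 2 * ⟪a ω, x (N+1)⟫) * t ω)
            + ((2 * c ^ 2) * (‖a ω‖ ^ 2 * t ω ^ 2)
            + (4 * (⟪a ω, x (N+1)⟫ ^ 2 * t ω ^ 2)
            + ((4 * c ^ 2) * (⟪a ω, x (N+1)⟫ * t ω ^ 3)
            + c ^ 4 * t ω ^ 4)))) := by
        funext ω
        have h2 := hpt ω
        calc ‖a ω + t ω • x (N+1)‖ ^ 4 = (‖a ω + t ω • x (N+1)‖ ^ 2) ^ 2 := by ring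
          _ = _ := by rw [h2]; ring
      have I1 := ihInt 4 (by norm_num)
      have I2 : Integrable (fun ω => (‖a ω‖ ^ 2 * ⟪a ω, x (N+1)⟫) * t ω) P := by
        have h := prod_int _ (hcA.mul hcB) id measurable_id IntAB (by simpa using Intt 1)
        simpa using h
      have I3 : Integrable (fun ω => ‖a ω‖ ^ 2 * t ω ^ 2) P :=
        prod_int _ hcA (fun r => r ^ 2) (by fun_prop) (ihInt 2 (by norm_num)) (Intt 2)
      have I4 : Integrable (fun ω => ⟪a ω, x (N+1)⟫ ^ 2 * t ω ^ 2) P :=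
        prod_int _ (by exact hcB.pow 2) (fun r => r ^ 2) (by fun_prop) IntB2 (Intt 2)
      have I5 : Integrable (fun ω => ⟪a ω, x (N+1)⟫ * t ω ^ 3) P :=
        prod_int _ hcB (fun r => r ^ 3) (by fun_prop) IntB (Intt 3)
      have I6 : Integrable (fun ω => c ^ 4 * t ω ^ 4) P := (Intt 4).const_mul _
      -- integral values
      have v2 : ∫ ω, (‖a ω‖ ^ 2 * ⟪a ω, x (N+1)⟫) * t ω ∂P = 0 := by
        have h := prod_eq (fun z => ‖z‖ ^ 2 * ⟪z, x (N+1)⟫) (hcA.mul hcB) id measurable_id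
        simp only [id_eq] at h
        rw [h, m1 (N+1), mul_zero]
      have v3 : ∫ ω, ‖a ω‖ ^ 2 * t ω ^ 2 ∂P = V := by
        have h := prod_eq _ hcA (fun r => r ^ 2) (by fun_prop)
        rw [h, m2 (N+1), ihV, mul_one]
      have v4 : ∫ ω, ⟪a ω, x (N+1)⟫ ^ 2 * t ω ^ 2 ∂P ≤ c ^ 2 * V := by
        have h := prod_eq (fun z => ⟪z, x (N+1)⟫ ^ 2) (by exact hcB.pow 2) (fun r => r ^ 2) (by fun_prop)
        rw [h, m2 (N+1), mul_one]
        have hmono : ∫ ω, ⟪a ω, x (N+1)⟫ ^ 2 ∂P ≤ ∫ ω, ‖a ω‖ ^ 2 * c ^ 2 ∂P := by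
          refine integral_mono IntB2 ((ihInt 2 (by norm_num)).mul_const _) fun ω => ?_
          calc ⟪a ω, x (N+1)⟫ ^ 2 = |⟪a ω, x (N+1)⟫| ^ 2 := (sq_abs _).symm
            _ ≤ (‖a ω‖ * c) ^ 2 := pow_le_pow_left₀ (abs_nonneg _) (hBle ω) 2
            _ = ‖a ω‖ ^ 2 * c ^ 2 := by ring
        rw [integral_mul_const, ihV] at hmono
        linarith
      have v5 : ∫ ω, ⟪a ω, x (N+1)⟫ * t ω ^ 3 ∂P = 0 := by
        have h := prod_eq _ hcB (fun r => r ^ 3) (by fun_prop)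
        rw [h, m3 (N+1), mul_zero]
      have v6 : ∫ ω, c ^ 4 * t ω ^ 4 ∂P = c ^ 4 * 3 := by
        rw [integral_const_mul, m4 (N+1)]
      have J5 : Integrable (fun ω => (4 * c ^ 2) * (⟪a ω, x (N+1)⟫ * t ω ^ 3)
          + c ^ 4 * t ω ^ 4) P := (I5.const_mul _).add I6
      have J4 : Integrable (fun ω => 4 * (⟪a ω, x (N+1)⟫ ^ 2 * t ω ^ 2)
          + ((4 * c ^ 2) * (⟪a ω, x (N+1)⟫ * t ω ^ 3) + c ^ 4 * t ω ^ 4)) P :=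
        (I4.const_mul 4).add J5
      have J3 : Integrable (fun ω => (2 * c ^ 2) * (‖a ω‖ ^ 2 * t ω ^ 2)
          + (4 * (⟪a ω, x (N+1)⟫ ^ 2 * t ω ^ 2)
          + ((4 * c ^ 2) * (⟪a ω, x (N+1)⟫ * t ω ^ 3) + c ^ 4 * t ω ^ 4))) P :=
        (I3.const_mul _).add J4
      have J2 : Integrable (fun ω => 4 * ((‖a ω‖ ^ 2 * ⟪a ω, x (N+1)⟫) * t ω)
          + ((2 * c ^ 2) * (‖a ω‖ ^ 2 * t ω ^ 2)
          + (4 * (⟪a ω, x (N+1)⟫ ^ 2 * t ω ^ 2)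
          + ((4 * c ^ 2) * (⟪a ω, x (N+1)⟫ * t ω ^ 3) + c ^ 4 * t ω ^ 4)))) P :=
        (I2.const_mul 4).add J3
      rw [e4, integral_add I1 J2,
        integral_add (I2.const_mul 4) J3,
        integral_add (I3.const_mul _) J4,
        integral_add (I4.const_mul 4) J5,
        integral_add (I5.const_mul _) I6,
        integral_const_mul, integral_const_mul, integral_const_mul, integral_const_mul,
        v2, v3, v5, v6]
      nlinarith [ih4, v4, hVnn, sq_nonneg c, sq_nonneg (V - c ^ 2)]


end AuxGaussianSeries

set_option maxHeartbeats 1000000 in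
/-- If the partial sums `Σ_N = ∑_{n=0}^N γ_n x_n` of a random Gaussian series in a separable
real Hilbert space converge weakly almost surely, then `∑ ‖x_n‖² < ∞`. -/
theorem summable_sq_of_gaussian_series_weak_convergence
    {X : Type*} [NormedAddCommGroup X] [InnerProductSpace ℝ X] [CompleteSpace X]
    [TopologicalSpace.SeparableSpace X]
    {Ω : Type*} [MeasurableSpace Ω] (P : Measure Ω) [IsProbabilityMeasure P]
    (γ : ℕ → Ω → ℝ) (hmeas : ∀ n, Measurable (γ n))
    (hindep : iIndepFun γ P)
    (hlaw : ∀ n, Measure.map (γ n) P = gaussianReal 0 1)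
    (x : ℕ → X)
    (hconv : ∀ᵐ ω ∂P, ∃ L : X, ∀ y : X,
      Tendsto (fun N => ⟪∑ n ∈ Finset.range (N + 1), γ n ω • x n, y⟫)
        atTop (nhds ⟪L, y⟫)) :
    Summable (fun n => ‖x n‖ ^ 2) := by
  classical
  -- the events of uniform boundedness
  set E : ℕ → Set Ω :=
    fun M => {ω | ∀ N : ℕ, ‖∑ n ∈ Finset.range (N + 1), γ n ω • x n‖ ^ 2 ≤ (M : ℝ)} with hE
  have hZmeas : ∀ N : ℕ,
      Measurable (fun ω => ‖∑ n ∈ Finset.range (N + 1), γ n ω • x n‖ ^ 2) :=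
    fun N => meas_g_sum γ hmeas x (fun z => ‖z‖ ^ 2) (continuous_norm.pow 2) (N + 1)
  have hEmeas : ∀ M, MeasurableSet (E M) := by
    intro M
    have : E M = ⋂ N : ℕ,
        {ω | ‖∑ n ∈ Finset.range (N + 1), γ n ω • x n‖ ^ 2 ≤ (M : ℝ)} := by
      ext ω; simp [hE, Set.mem_iInter]
    rw [this]
    exact MeasurableSet.iInter fun N => measurableSet_le (hZmeas N) measurable_const
  have hEmono : Monotone E := by
    intro i j hij ω hω N
    exact le_trans (hω N) (by exact_mod_cast hij)
  -- almost surely some event occurs, by Banach–Steinhaus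
  have hcover : ∀ᵐ ω ∂P, ω ∈ ⋃ M : ℕ, E M := by
    filter_upwards [hconv] with ω hω
    obtain ⟨L, hL⟩ := hω
    have hbdd : ∀ y : X, ∃ C, ∀ N : ℕ,
        ‖(innerSL ℝ (∑ n ∈ Finset.range (N + 1), γ n ω • x n)) y‖ ≤ C := by
      intro y
      obtain ⟨C, hC⟩ := ((hL y).norm).bddAbove_range
      exact ⟨C, fun N => hC (Set.mem_range_self N)⟩
    obtain ⟨C, hC⟩ := banach_steinhaus hbdd
    refine Set.mem_iUnion.2 ⟨⌈C ^ 2⌉₊, fun N => ?_⟩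
    have h1 : ‖∑ n ∈ Finset.range (N + 1), γ n ω • x n‖ ≤ C := by
      rw [← innerSL_apply_norm (𝕜 := ℝ)]
      exact hC N
    calc ‖∑ n ∈ Finset.range (N + 1), γ n ω • x n‖ ^ 2 ≤ C ^ 2 :=
          pow_le_pow_left₀ (norm_nonneg _) h1 2
      _ ≤ (⌈C ^ 2⌉₊ : ℝ) := Nat.le_ceil _
  have hUnionMeas : MeasurableSet (⋃ M : ℕ, E M) := MeasurableSet.iUnion hEmeas
  have hP1 : P (⋃ M : ℕ, E M) = 1 := by
    have h0 : P (⋃ M : ℕ, E M)ᶜ = 0 := by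
      rw [ae_iff] at hcover
      exact hcover
    have := prob_compl_eq_one_sub (μ := P) hUnionMeas
    rw [h0] at this
    have h1 := tsub_eq_zero_iff_le.mp this.symm
    exact le_antisymm prob_le_one h1
  -- pick an event with probability close to one
  have htend : Tendsto (fun M => (P (E M)).toReal) atTop (nhds 1) := by
    have h1 := tendsto_measure_iUnion_atTop (μ := P) hEmono
    rw [hP1] at h1
    have h2 := (ENNReal.tendsto_toReal (by norm_num : (1:ENNReal) ≠ ⊤)).comp h1
    exact h2
  obtain ⟨M, hM⟩ := (htend.eventually (eventually_gt_nhds (by norm_num : (7/8:ℝ) < 1))).exists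
  -- the complement has small probability
  have hEc : (P (E M)ᶜ).toReal ≤ 1/8 := by
    have hcompl : P (E M)ᶜ = 1 - P (E M) := prob_compl_eq_one_sub (hEmeas M)
    have h2 : (P (E M)ᶜ).toReal = 1 - (P (E M)).toReal := by
      rw [hcompl, ENNReal.toReal_sub_of_le prob_le_one (by norm_num)]
      norm_num
    rw [h2]
    linarith
  -- uniform bound on second moments
  have key : ∀ N : ℕ, ∑ n ∈ Finset.range (N + 1), ‖x n‖ ^ 2 ≤ 8 * M + 1 := by
    intro N
    obtain ⟨hInt, hV, h4⟩ := series_moments P γ hmeas hindep hlaw x N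
    set V : ℝ := ∑ n ∈ Finset.range (N + 1), ‖x n‖ ^ 2 with hVdef
    have hVnn : 0 ≤ V := Finset.sum_nonneg fun i _ => by positivity
    set Z : Ω → ℝ := fun ω => ‖∑ n ∈ Finset.range (N + 1), γ n ω • x n‖ ^ 2 with hZdef
    have hZnn : ∀ ω, 0 ≤ Z ω := fun ω => by positivity
    have hIntZ : Integrable Z P := hInt 2 (by norm_num)
    have hIntZ2 : Integrable (fun ω => Z ω ^ 2) P := by
      have h := hInt 4 (by norm_num)
      have e : (fun ω => Z ω ^ 2)
          = fun ω => ‖∑ n ∈ Finset.range (N + 1), γ n ω • x n‖ ^ 4 := by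
        funext ω; rw [hZdef]; ring
      rw [e]; exact h
    have hZ2bound : ∫ ω, Z ω ^ 2 ∂P ≤ 3 * V ^ 2 := by
      have e : (fun ω => Z ω ^ 2)
          = fun ω => ‖∑ n ∈ Finset.range (N + 1), γ n ω • x n‖ ^ 4 := by
        funext ω; rw [hZdef]; ring
      rw [e]; exact h4
    set t : ℝ := 2 * V + 1 with htdef
    have htpos : 0 < t := by positivity
    -- split the integral
    have hsplit : (∫ ω in E M, Z ω ∂P) + (∫ ω in (E M)ᶜ, Z ω ∂P) = V := by
      rw [integral_add_compl (hEmeas M) hIntZ, hV]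
    -- bound on the event
    have hon : ∫ ω in E M, Z ω ∂P ≤ (M : ℝ) := by
      have h1 : ∫ ω in E M, Z ω ∂P ≤ ∫ _ω in E M, (M : ℝ) ∂P := by
        refine setIntegral_mono_on hIntZ.integrableOn
          (integrableOn_const) (hEmeas M) ?_
        intro ω hω
        exact hω N
      have h2 : ∫ _ω in E M, (M : ℝ) ∂P = (P (E M)).toReal * M := by
        rw [setIntegral_const, smul_eq_mul, measureReal_def]
      rw [h2] at h1
      calc ∫ ω in E M, Z ω ∂P ≤ (P (E M)).toReal * M := h1
        _ ≤ 1 * M := by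
            have : (P (E M)).toReal ≤ 1 := by
              have := prob_le_one (μ := P) (s := E M)
              exact ENNReal.toReal_le_of_le_ofReal (by norm_num) (by simpa using this)
            exact mul_le_mul_of_nonneg_right this (Nat.cast_nonneg M)
        _ = M := one_mul _
    -- bound off the event via AM-GM
    have hoff : ∫ ω in (E M)ᶜ, Z ω ∂P
        ≤ ((∫ ω, Z ω ^ 2 ∂P) / t + t * (P (E M)ᶜ).toReal) / 2 := by
      have hptwise : ∀ ω, Z ω ≤ (Z ω ^ 2 / t + t) / 2 := by
        intro ω
        rw [div_add' _ _ _ (ne_of_gt htpos), div_div, le_div_iff₀ (by positivity)]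
        nlinarith [sq_nonneg (Z ω - t), htpos]
      have hIntR : IntegrableOn (fun ω => (Z ω ^ 2 / t + t) / 2) (E M)ᶜ P := by
        refine (Integrable.integrableOn ?_)
        exact (((hIntZ2.div_const t).add (integrable_const t)).div_const 2)
      have h1 : ∫ ω in (E M)ᶜ, Z ω ∂P ≤ ∫ ω in (E M)ᶜ, (Z ω ^ 2 / t + t) / 2 ∂P :=
        setIntegral_mono_on hIntZ.integrableOn hIntR (hEmeas M).compl
          (fun ω _ => hptwise ω)
      have h2 : ∫ ω in (E M)ᶜ, (Z ω ^ 2 / t + t) / 2 ∂P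
          = ((∫ ω in (E M)ᶜ, Z ω ^ 2 ∂P) / t + t * (P (E M)ᶜ).toReal) / 2 := by
        rw [integral_div, integral_add ((hIntZ2.div_const t).integrableOn)
          ((integrable_const t).integrableOn), integral_div, setIntegral_const, smul_eq_mul, measureReal_def,
          mul_comm]
      have h3 : ∫ ω in (E M)ᶜ, Z ω ^ 2 ∂P ≤ ∫ ω, Z ω ^ 2 ∂P :=
        setIntegral_le_integral hIntZ2 (Filter.Eventually.of_forall fun ω => by positivity)
      rw [h2] at h1
      have ht' : 0 < t := htpos
      calc ∫ ω in (E M)ᶜ, Z ω ∂P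
          ≤ ((∫ ω in (E M)ᶜ, Z ω ^ 2 ∂P) / t + t * (P (E M)ᶜ).toReal) / 2 := h1
        _ ≤ ((∫ ω, Z ω ^ 2 ∂P) / t + t * (P (E M)ᶜ).toReal) / 2 := by
            gcongr
    -- combine everything
    have hoff2 : ∫ ω in (E M)ᶜ, Z ω ∂P ≤ ((3 * V ^ 2) / t + t * (1/8)) / 2 := by
      refine le_trans hoff ?_
      gcongr
    have hdiv : (3 * V ^ 2) / t ≤ (3/2) * V := by
      rw [div_le_iff₀ htpos, htdef]
      nlinarith
    have hoffE : 0 ≤ ∫ ω in E M, Z ω ∂P :=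
      setIntegral_nonneg (hEmeas M) fun ω _ => hZnn ω
    rw [htdef] at hoff2 hdiv
    linarith
  refine summable_of_sum_range_le (c := 8 * M + 1) (fun n => by positivity) ?_
  intro n
  cases n with
  | zero => simp; positivity
  | succ N => exact key N
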